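/- Combining the three regions, there exists an absolute constant C > 0 such that for every ρ > 0 and every w ∈ ℝ³ with 0 < |w| < ρ/2, ∫_{B_ρ ∩ {z₃>0}} |z|^{-1}|z−w|^{-2} dz ≤ C (1 + ln(ρ/|w|)). -/

import Mathlib

open MeasureTheory Real Metric Set ENNReal

lemma finrank_E3 : Module.finrank ℝ (EuclideanSpace ℝ (Fin 3)) = 3 := by
  simp [finrank_euclideanSpace]

lemma key_real (p : ℕ) (hp1 : 1 ≤ p) (hp : p < 3) (b : ℝ) (hb : 0 < b) (k : ℕ) :
    ((b * (2⁻¹:ℝ) ^ (k+1)) ^ p)⁻¹ * (b * (2⁻¹:ℝ) ^ k) ^ 3 ≤ 2 ^ p * b ^ (3 - p) * (2⁻¹:ℝ) ^ k := by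
  set t := (2⁻¹ : ℝ) ^ k with htdef
  have ht0 : 0 < t := by positivity
  have ht1 : t ≤ 1 := pow_le_one₀ (by norm_num) (by norm_num)
  have hsucc : (2⁻¹ : ℝ) ^ (k + 1) = t * 2⁻¹ := pow_succ _ _
  rw [hsucc]
  interval_cases p
  · have h1 : ((b * (t * 2⁻¹)) ^ 1)⁻¹ * (b * t) ^ 3 = 2 * b ^ 2 * t ^ 2 := by
      field_simp
    rw [h1, show 3 - 1 = 2 from rfl]
    nlinarith [mul_nonneg (sq_nonneg b) (mul_nonneg ht0.le (sub_nonneg.2 ht1))]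
  · have h1 : ((b * (t * 2⁻¹)) ^ 2)⁻¹ * (b * t) ^ 3 = 4 * b * t := by
      field_simp; ring
    rw [h1, show 3 - 2 = 1 from rfl]
    nlinarith [ht0.le]

-- Lemma A: near-singularity dyadic bound, p ∈ {1,2}
lemma lemA (p : ℕ) (hp1 : 1 ≤ p) (hp : p < 3) (x : EuclideanSpace ℝ (Fin 3)) (b : ℝ) (hb : 0 < b) :
    ∫⁻ z in ball x b, ENNReal.ofReal ((‖z - x‖ ^ p)⁻¹) ∂volume ≤
      volume (closedBall (0 : EuclideanSpace ℝ (Fin 3)) 1) *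
        ENNReal.ofReal (2 ^ p * 2 * b ^ (3 - p)) := by
  set v := volume (closedBall (0 : EuclideanSpace ℝ (Fin 3)) 1) with hv
  set A : ℕ → Set (EuclideanSpace ℝ (Fin 3)) :=
    fun k => {z | b * (2⁻¹ : ℝ) ^ (k + 1) < ‖z - x‖ ∧ ‖z - x‖ ≤ b * (2⁻¹ : ℝ) ^ k} with hA
  have hcover : ball x b ⊆ {x} ∪ ⋃ k, A k := by
    intro z hz
    rcases eq_or_ne z x with h | h
    · exact Or.inl h
    · right
      have ht0 : 0 < ‖z - x‖ := by
        simpa [sub_eq_zero] using norm_pos_iff.2 (sub_ne_zero.2 h)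
      have htb : ‖z - x‖ < b := by simpa [mem_ball, dist_eq_norm] using hz
      obtain ⟨n, hn⟩ : ∃ n : ℕ, b * (2⁻¹ : ℝ) ^ n < ‖z - x‖ := by
        obtain ⟨n, hn⟩ := exists_pow_lt_of_lt_one (div_pos ht0 hb) (by norm_num : (2⁻¹ : ℝ) < 1)
        exact ⟨n, by rw [mul_comm]; exact (lt_div_iff₀ hb).1 hn⟩
      classical
      have hex : ∃ n : ℕ, b * (2⁻¹ : ℝ) ^ n < ‖z - x‖ := ⟨n, hn⟩
      set m := Nat.find hex with hm
      have hms : b * (2⁻¹ : ℝ) ^ m < ‖z - x‖ := Nat.find_spec hex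
      have hm0 : m ≠ 0 := by
        intro h0
        rw [h0] at hms
        simp at hms
        linarith
      obtain ⟨k, hk⟩ := Nat.exists_eq_succ_of_ne_zero hm0
      refine mem_iUnion.2 ⟨k, ?_, ?_⟩
      · rw [← Nat.succ_eq_add_one, ← hk]; exact hms
      · have := Nat.find_min hex (m := k) (by omega)
        push_neg at this
        exact this
  have hAk : ∀ k : ℕ, ∫⁻ z in A k, ENNReal.ofReal ((‖z - x‖ ^ p)⁻¹) ∂volume ≤
      ENNReal.ofReal (2 ^ p * b ^ (3 - p) * (2⁻¹ : ℝ) ^ k) * v := by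
    intro k
    have hr1 : 0 < b * (2⁻¹ : ℝ) ^ (k + 1) := by positivity
    have hr2 : 0 < b * (2⁻¹ : ℝ) ^ k := by positivity
    calc ∫⁻ z in A k, ENNReal.ofReal ((‖z - x‖ ^ p)⁻¹) ∂volume
        ≤ ∫⁻ _ in A k, ENNReal.ofReal (((b * (2⁻¹ : ℝ) ^ (k + 1)) ^ p)⁻¹) ∂volume := by
          refine setLIntegral_mono measurable_const fun z hz => ?_
          refine ENNReal.ofReal_le_ofReal ?_
          exact inv_anti₀ (pow_pos hr1 p) (pow_le_pow_left₀ hr1.le hz.1.le p)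
      _ = ENNReal.ofReal (((b * (2⁻¹ : ℝ) ^ (k + 1)) ^ p)⁻¹) * volume (A k) :=
          setLIntegral_const _ _
      _ ≤ ENNReal.ofReal (((b * (2⁻¹ : ℝ) ^ (k + 1)) ^ p)⁻¹) *
            (ENNReal.ofReal ((b * (2⁻¹ : ℝ) ^ k) ^ 3) * v) := by
          gcongr
          have hsub : A k ⊆ closedBall x (b * (2⁻¹ : ℝ) ^ k) := by
            intro z hz
            simpa [mem_closedBall, dist_eq_norm] using hz.2
          calc volume (A k) ≤ volume (closedBall x (b * (2⁻¹ : ℝ) ^ k)) := measure_mono hsub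
            _ = ENNReal.ofReal ((b * (2⁻¹ : ℝ) ^ k) ^ 3) * v := by
                rw [Measure.addHaar_closedBall' volume x hr2.le, finrank_E3]
      _ = ENNReal.ofReal (((b * (2⁻¹ : ℝ) ^ (k + 1)) ^ p)⁻¹ * (b * (2⁻¹ : ℝ) ^ k) ^ 3) * v := by
          rw [← mul_assoc, ← ENNReal.ofReal_mul (by positivity)]
      _ ≤ ENNReal.ofReal (2 ^ p * b ^ (3 - p) * (2⁻¹ : ℝ) ^ k) * v := by
          exact mul_le_mul_left (ENNReal.ofReal_le_ofReal (key_real p hp1 hp b hb k)) v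
  calc ∫⁻ z in ball x b, ENNReal.ofReal ((‖z - x‖ ^ p)⁻¹) ∂volume
      ≤ ∫⁻ z in {x} ∪ ⋃ k, A k, ENNReal.ofReal ((‖z - x‖ ^ p)⁻¹) ∂volume :=
        lintegral_mono_set hcover
    _ ≤ (∫⁻ z in ({x} : Set (EuclideanSpace ℝ (Fin 3))), ENNReal.ofReal ((‖z - x‖ ^ p)⁻¹) ∂volume)
          + ∫⁻ z in ⋃ k, A k, ENNReal.ofReal ((‖z - x‖ ^ p)⁻¹) ∂volume :=
        lintegral_union_le _ _ _
    _ ≤ 0 + ∑' k, ∫⁻ z in A k, ENNReal.ofReal ((‖z - x‖ ^ p)⁻¹) ∂volume := by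
        gcongr
        · rw [setLIntegral_measure_zero _ _ (measure_singleton x)]
        · exact lintegral_iUnion_le _ _
    _ ≤ ∑' k, ENNReal.ofReal (2 ^ p * b ^ (3 - p) * (2⁻¹ : ℝ) ^ k) * v := by
        rw [zero_add]; exact ENNReal.tsum_le_tsum hAk
    _ = (∑' k : ℕ, ENNReal.ofReal (2 ^ p * b ^ (3 - p) * (2⁻¹ : ℝ) ^ k)) * v :=
        ENNReal.tsum_mul_right
    _ = ENNReal.ofReal (∑' k : ℕ, 2 ^ p * b ^ (3 - p) * (2⁻¹ : ℝ) ^ k) * v := by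
        rw [ENNReal.ofReal_tsum_of_nonneg (fun k => by positivity)
          ((summable_geometric_of_lt_one (by norm_num) (by norm_num)).mul_left _)]
    _ = v * ENNReal.ofReal (2 ^ p * 2 * b ^ (3 - p)) := by
        rw [tsum_mul_left, tsum_geometric_of_lt_one (by norm_num) (by norm_num), mul_comm]
        norm_num
        ring_nf
        rw [ENNReal.ofReal_mul (by positivity), ENNReal.ofReal_mul (by positivity),
          ENNReal.ofReal_pow hb.le]
        simp [mul_assoc, ENNReal.ofReal_pow]

-- Lemma B: annulus bound with logarithmic count
lemma lemB (x : EuclideanSpace ℝ (Fin 3)) (b R : ℝ) (hb : 0 < b) (hbR : b < R) :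
    ∫⁻ z in {z : EuclideanSpace ℝ (Fin 3) | b < ‖z - x‖ ∧ ‖z - x‖ < R},
        ENNReal.ofReal ((‖z - x‖ ^ 3)⁻¹) ∂volume ≤
      (⌈Real.logb 2 (R / b)⌉₊ : ℝ≥0∞) *
        (ENNReal.ofReal 8 * volume (closedBall (0 : EuclideanSpace ℝ (Fin 3)) 1)) := by
  classical
  set v := volume (closedBall (0 : EuclideanSpace ℝ (Fin 3)) 1) with hv
  set N := ⌈Real.logb 2 (R / b)⌉₊ with hN
  set S : Set (EuclideanSpace ℝ (Fin 3)) := {z | b < ‖z - x‖ ∧ ‖z - x‖ < R} with hS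
  set A : ℕ → Set (EuclideanSpace ℝ (Fin 3)) :=
    fun k => S ∩ {z | b * 2 ^ k < ‖z - x‖ ∧ ‖z - x‖ ≤ b * 2 ^ (k + 1)} with hA
  have h2N : R / b ≤ (2 : ℝ) ^ N := by
    have h1 : R / b = (2 : ℝ) ^ Real.logb 2 (R / b) :=
      (Real.rpow_logb two_pos (by norm_num) (div_pos (hb.trans hbR) hb)).symm
    calc R / b = (2 : ℝ) ^ Real.logb 2 (R / b) := h1
      _ ≤ (2 : ℝ) ^ (N : ℝ) := by
          exact Real.rpow_le_rpow_of_exponent_le one_le_two (Nat.le_ceil _)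
      _ = (2 : ℝ) ^ N := Real.rpow_natCast 2 N
  have hcover : S ⊆ ⋃ k, A k := by
    intro z hz
    obtain ⟨hz1, hz2⟩ := hz
    have hex : ∃ n : ℕ, ‖z - x‖ ≤ b * 2 ^ (n + 1) := by
      obtain ⟨n, hn⟩ := pow_unbounded_of_one_lt (‖z - x‖ / b) (one_lt_two (α := ℝ))
      refine ⟨n, le_of_lt ?_⟩
      have : ‖z - x‖ < b * 2 ^ n := by
        rw [mul_comm]; exact (div_lt_iff₀ hb).1 hn
      calc ‖z - x‖ < b * 2 ^ n := this
        _ ≤ b * 2 ^ (n + 1) := by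
            have : (2:ℝ) ^ n ≤ 2 ^ (n+1) := pow_le_pow_right₀ one_le_two (by omega)
            nlinarith
    set k := Nat.find hex with hk
    refine mem_iUnion.2 ⟨k, ⟨hz1, hz2⟩, ?_, Nat.find_spec hex⟩
    rcases Nat.eq_zero_or_pos k with h0 | h0
    · rw [h0]; simpa using hz1
    · obtain ⟨j, hj⟩ := Nat.exists_eq_succ_of_ne_zero h0.ne'
      have := Nat.find_min hex (m := j) (by omega)
      push_neg at this
      rw [hj]
      exact this
  have htail : ∀ k : ℕ, N ≤ k → A k = ∅ := by
    intro k hkN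
    ext z
    simp only [hA, mem_inter_iff, mem_setOf_eq, mem_empty_iff_false, iff_false, not_and]
    intro hzS h1 h2
    have h3 : b * 2 ^ k < R := lt_trans h1 hzS.2
    have h4 : (2 : ℝ) ^ k < R / b := (lt_div_iff₀ hb).2 (by linarith [h3])
    have h5 : (2 : ℝ) ^ N ≤ (2 : ℝ) ^ k := pow_le_pow_right₀ one_le_two hkN
    linarith
  have hAk : ∀ k : ℕ, ∫⁻ z in A k, ENNReal.ofReal ((‖z - x‖ ^ 3)⁻¹) ∂volume ≤
      ENNReal.ofReal 8 * v := by
    intro k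
    have hr1 : (0:ℝ) < b * 2 ^ k := by positivity
    have hr2 : (0:ℝ) < b * 2 ^ (k + 1) := by positivity
    calc ∫⁻ z in A k, ENNReal.ofReal ((‖z - x‖ ^ 3)⁻¹) ∂volume
        ≤ ∫⁻ _ in A k, ENNReal.ofReal (((b * (2:ℝ) ^ k) ^ 3)⁻¹) ∂volume := by
          refine setLIntegral_mono measurable_const fun z hz => ?_
          refine ENNReal.ofReal_le_ofReal ?_
          exact inv_anti₀ (pow_pos hr1 3) (pow_le_pow_left₀ hr1.le hz.2.1.le 3)
      _ = ENNReal.ofReal (((b * (2:ℝ) ^ k) ^ 3)⁻¹) * volume (A k) := setLIntegral_const _ _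
      _ ≤ ENNReal.ofReal (((b * (2:ℝ) ^ k) ^ 3)⁻¹) *
            (ENNReal.ofReal ((b * (2:ℝ) ^ (k + 1)) ^ 3) * v) := by
          gcongr
          have hsub : A k ⊆ closedBall x (b * 2 ^ (k + 1)) := by
            intro z hz
            simpa [mem_closedBall, dist_eq_norm] using hz.2.2
          calc volume (A k) ≤ volume (closedBall x (b * 2 ^ (k + 1))) := measure_mono hsub
            _ = ENNReal.ofReal ((b * (2:ℝ) ^ (k + 1)) ^ 3) * v := by
                rw [Measure.addHaar_closedBall' volume x hr2.le, finrank_E3]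
      _ = ENNReal.ofReal (((b * (2:ℝ) ^ k) ^ 3)⁻¹ * (b * (2:ℝ) ^ (k + 1)) ^ 3) * v := by
          rw [← mul_assoc, ← ENNReal.ofReal_mul (by positivity)]
      _ = ENNReal.ofReal 8 * v := by
          congr 1
          have : ((b * (2:ℝ) ^ k) ^ 3)⁻¹ * (b * (2:ℝ) ^ (k + 1)) ^ 3 = 8 := by
            rw [pow_succ]
            field_simp
            ring
          rw [this]
  calc ∫⁻ z in S, ENNReal.ofReal ((‖z - x‖ ^ 3)⁻¹) ∂volume
      ≤ ∫⁻ z in ⋃ k, A k, ENNReal.ofReal ((‖z - x‖ ^ 3)⁻¹) ∂volume := lintegral_mono_set hcover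
    _ ≤ ∑' k, ∫⁻ z in A k, ENNReal.ofReal ((‖z - x‖ ^ 3)⁻¹) ∂volume := lintegral_iUnion_le _ _
    _ = ∑ k ∈ Finset.range N, ∫⁻ z in A k, ENNReal.ofReal ((‖z - x‖ ^ 3)⁻¹) ∂volume := by
        refine tsum_eq_sum fun k hk => ?_
        rw [htail k (by have := Finset.mem_range.not.1 hk; omega)]
        simp
    _ ≤ ∑ k ∈ Finset.range N, ENNReal.ofReal 8 * v :=
        Finset.sum_le_sum fun k _ => hAk k
    _ = (N : ℝ≥0∞) * (ENNReal.ofReal 8 * v) := by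
        rw [Finset.sum_const, Finset.card_range, nsmul_eq_mul]

set_option maxHeartbeats 1200000 in
theorem singular_integral_halfball_log_bound :
    ∃ C : ℝ, 0 < C ∧
      ∀ (ρ : ℝ) (w : EuclideanSpace ℝ (Fin 3)), 0 < ρ → 0 < ‖w‖ → ‖w‖ < ρ / 2 →
        (∫ z in {z : EuclideanSpace ℝ (Fin 3) | ‖z‖ < ρ ∧ 0 < z 2},
            ‖z‖⁻¹ * (‖z - w‖ ^ 2)⁻¹) ≤ C * (1 + Real.log (ρ / ‖w‖)) := by
  classical
  set v := volume (closedBall (0 : EuclideanSpace ℝ (Fin 3)) 1) with hv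
  have hvne : v ≠ ⊤ := measure_closedBall_lt_top.ne
  have hvpos : 0 < v.toReal := by
    refine ENNReal.toReal_pos ?_ hvne
    refine (measure_ball_pos volume (0 : EuclideanSpace ℝ (Fin 3)) one_pos).trans_le
      (measure_mono ball_subset_closedBall) |>.ne'
  refine ⟨96 * v.toReal, by positivity, ?_⟩
  intro ρ w hρ hw hwρ
  set b := ‖w‖ / 2 with hbdef
  have hb : 0 < b := by positivity
  set L := Real.log (ρ / ‖w‖) with hLdef
  have hratio : (2 : ℝ) < ρ / ‖w‖ := by
    rw [lt_div_iff₀ hw]; linarith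
  have hL0 : 0 ≤ L := Real.log_nonneg (by linarith)
  set M := 1 + L with hMdef
  have hM1 : (1 : ℝ) ≤ M := by simp [hMdef]; linarith
  set f : EuclideanSpace ℝ (Fin 3) → ℝ := fun z => ‖z‖⁻¹ * (‖z - w‖ ^ 2)⁻¹ with hf
  have hfm : Measurable f := by
    exact (measurable_norm.inv).mul (((measurable_id.sub_const w).norm.pow_const 2).inv)
  set S : Set (EuclideanSpace ℝ (Fin 3)) := {z | ‖z‖ < ρ ∧ 0 < z 2} with hSdef
  -- rewrite the integral as toReal of a lintegral
  have hint : (∫ z in S, f z) = (∫⁻ z in S, ENNReal.ofReal (f z)).toReal := by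
    refine integral_eq_lintegral_of_nonneg_ae ?_ hfm.aestronglyMeasurable
    exact Filter.Eventually.of_forall fun z => by positivity
  -- the three pieces
  set A := closedBall (0 : EuclideanSpace ℝ (Fin 3)) b with hAdef
  set B := closedBall w b with hBdef
  set Cs : Set (EuclideanSpace ℝ (Fin 3)) :=
    {z | b < ‖z‖ ∧ ‖z‖ < ρ ∧ b < ‖z - w‖} with hCdef
  have hcover : S ⊆ A ∪ B ∪ Cs := by
    intro z hz
    by_cases h1 : ‖z‖ ≤ b
    · exact Or.inl (Or.inl (by rw [hAdef]; simpa [mem_closedBall_zero_iff] using h1))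
    · by_cases h2 : ‖z - w‖ ≤ b
      · exact Or.inl (Or.inr (by rw [hBdef]; simpa [mem_closedBall, dist_eq_norm] using h2))
      · exact Or.inr ⟨lt_of_not_ge h1, hz.1, lt_of_not_ge h2⟩
  -- piece A
  have hA2 : ∫⁻ z in A, ENNReal.ofReal (f z) ≤ v * ENNReal.ofReal 16 := by
    have hptA : ∀ z ∈ A, ENNReal.ofReal (f z) ≤
        ENNReal.ofReal ((b ^ 2)⁻¹) * ENNReal.ofReal ‖z‖⁻¹ := by
      intro z hz
      rw [← ENNReal.ofReal_mul (by positivity)]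
      refine ENNReal.ofReal_le_ofReal ?_
      rw [hAdef] at hz
      have hz' : ‖z‖ ≤ b := by simpa [mem_closedBall_zero_iff] using hz
      have hzw : b ≤ ‖z - w‖ := by
        have h1 : ‖w‖ - ‖z‖ ≤ ‖z - w‖ := by
          rw [norm_sub_rev]; exact norm_sub_norm_le w z
        have : ‖w‖ = 2 * b := by rw [hbdef]; ring
        linarith
      have h2 : (‖z - w‖ ^ 2)⁻¹ ≤ (b ^ 2)⁻¹ :=
        inv_anti₀ (by positivity) (pow_le_pow_left₀ hb.le hzw 2)
      calc f z = ‖z‖⁻¹ * (‖z - w‖ ^ 2)⁻¹ := rfl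
        _ ≤ ‖z‖⁻¹ * (b ^ 2)⁻¹ := by gcongr
        _ = (b ^ 2)⁻¹ * ‖z‖⁻¹ := by ring
    calc ∫⁻ z in A, ENNReal.ofReal (f z)
        ≤ ∫⁻ z in A, ENNReal.ofReal ((b ^ 2)⁻¹) * ENNReal.ofReal ‖z‖⁻¹ :=
          setLIntegral_mono (measurable_norm.inv.ennreal_ofReal.const_mul _) hptA
      _ = ENNReal.ofReal ((b ^ 2)⁻¹) * ∫⁻ z in A, ENNReal.ofReal ‖z‖⁻¹ :=
          lintegral_const_mul' _ _ ENNReal.ofReal_ne_top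
      _ ≤ ENNReal.ofReal ((b ^ 2)⁻¹) * (v * ENNReal.ofReal (2 ^ 1 * 2 * (2 * b) ^ (3 - 1))) := by
          gcongr
          have h3 : (∫⁻ z in A, ENNReal.ofReal ‖z‖⁻¹) ≤
              ∫⁻ z in ball (0 : EuclideanSpace ℝ (Fin 3)) (2 * b), ENNReal.ofReal ‖z‖⁻¹ :=
            lintegral_mono_set (closedBall_subset_ball (by linarith))
          refine h3.trans ?_
          have := lemA 1 le_rfl (by norm_num) 0 (2 * b) (by positivity)
          rw [hv]; simpa using this
      _ = v * (ENNReal.ofReal ((b ^ 2)⁻¹) * ENNReal.ofReal (2 ^ 1 * 2 * (2 * b) ^ (3 - 1))) := by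
          ring
      _ = v * ENNReal.ofReal 16 := by
          rw [← ENNReal.ofReal_mul (by positivity)]
          congr 1
          rw [show (3 - 1 : ℕ) = 2 from rfl]
          field_simp
          ring
  -- piece B
  have hB2 : ∫⁻ z in B, ENNReal.ofReal (f z) ≤ v * ENNReal.ofReal 16 := by
    have hptB : ∀ z ∈ B, ENNReal.ofReal (f z) ≤
        ENNReal.ofReal b⁻¹ * ENNReal.ofReal ((‖z - w‖ ^ 2)⁻¹) := by
      intro z hz
      rw [← ENNReal.ofReal_mul (by positivity)]
      refine ENNReal.ofReal_le_ofReal ?_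
      rw [hBdef] at hz
      have hz' : ‖z - w‖ ≤ b := by simpa [mem_closedBall, dist_eq_norm] using hz
      have hzn : b ≤ ‖z‖ := by
        have h1 : ‖w‖ ≤ ‖z‖ + ‖z - w‖ := by
          calc ‖w‖ = ‖z + (w - z)‖ := by rw [show z + (w - z) = w by abel]
            _ ≤ ‖z‖ + ‖w - z‖ := norm_add_le _ _
            _ = ‖z‖ + ‖z - w‖ := by rw [norm_sub_rev]
        have h2 : ‖w‖ = 2 * b := by rw [hbdef]; ring
        linarith
      have h2 : ‖z‖⁻¹ ≤ b⁻¹ := inv_anti₀ hb hzn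
      calc f z = ‖z‖⁻¹ * (‖z - w‖ ^ 2)⁻¹ := rfl
        _ ≤ b⁻¹ * (‖z - w‖ ^ 2)⁻¹ := by gcongr
    calc ∫⁻ z in B, ENNReal.ofReal (f z)
        ≤ ∫⁻ z in B, ENNReal.ofReal b⁻¹ * ENNReal.ofReal ((‖z - w‖ ^ 2)⁻¹) := by
          refine setLIntegral_mono ?_ hptB
          exact (((measurable_id.sub_const w).norm.pow_const 2).inv.ennreal_ofReal).const_mul _
      _ = ENNReal.ofReal b⁻¹ * ∫⁻ z in B, ENNReal.ofReal ((‖z - w‖ ^ 2)⁻¹) :=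
          lintegral_const_mul' _ _ ENNReal.ofReal_ne_top
      _ ≤ ENNReal.ofReal b⁻¹ * (v * ENNReal.ofReal (2 ^ 2 * 2 * (2 * b) ^ (3 - 2))) := by
          gcongr
          have h3 : (∫⁻ z in B, ENNReal.ofReal ((‖z - w‖ ^ 2)⁻¹)) ≤
              ∫⁻ z in ball w (2 * b), ENNReal.ofReal ((‖z - w‖ ^ 2)⁻¹) := by
            rw [hBdef]
            exact lintegral_mono_set (closedBall_subset_ball (by linarith))
          exact h3.trans (lemA 2 (by norm_num) (by norm_num) w (2 * b) (by positivity))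
      _ = v * (ENNReal.ofReal b⁻¹ * ENNReal.ofReal (2 ^ 2 * 2 * (2 * b) ^ (3 - 2))) := by ring
      _ = v * ENNReal.ofReal 16 := by
          rw [← ENNReal.ofReal_mul (by positivity)]
          congr 1
          rw [show (3 - 2 : ℕ) = 1 from rfl]
          field_simp
          ring
  -- count bound helper
  have hcount : ∀ y : ℝ, 1 ≤ y → (⌈Real.logb 2 y⌉₊ : ℝ) ≤ 1 + 2 * Real.log y := by
    intro y hy
    have hlog : 0 ≤ Real.log y := Real.log_nonneg hy
    have hlb : Real.logb 2 y ≤ 2 * Real.log y := by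
      rw [Real.logb, div_le_iff₀ (Real.log_pos one_lt_two)]
      nlinarith [Real.log_two_gt_d9]
    have h2 := Nat.ceil_lt_add_one (Real.logb_nonneg one_lt_two hy)
    linarith
  -- piece C
  have hC2 : ∫⁻ z in Cs, ENNReal.ofReal (f z) ≤ v * ENNReal.ofReal (64 * M) := by
    have hptC : ∀ z ∈ Cs, ENNReal.ofReal (f z) ≤
        ENNReal.ofReal ((‖z‖ ^ 3)⁻¹) + ENNReal.ofReal ((‖z - w‖ ^ 3)⁻¹) := by
      intro z hz
      obtain ⟨hz1, hz2, hz3⟩ := hz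
      have hzp : 0 < ‖z‖ := hb.trans hz1
      have hzwp : 0 < ‖z - w‖ := hb.trans hz3
      rcases le_total ‖z‖ ‖z - w‖ with h | h
      · refine le_trans ?_ (le_add_right le_rfl)
        refine ENNReal.ofReal_le_ofReal ?_
        have h1 : (‖z - w‖ ^ 2)⁻¹ ≤ (‖z‖ ^ 2)⁻¹ :=
          inv_anti₀ (by positivity) (pow_le_pow_left₀ hzp.le h 2)
        calc f z ≤ ‖z‖⁻¹ * (‖z‖ ^ 2)⁻¹ := by
              simp only [hf]; gcongr
          _ = (‖z‖ ^ 3)⁻¹ := by rw [← mul_inv]; ring_nf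
      · refine le_trans ?_ (le_add_left le_rfl)
        refine ENNReal.ofReal_le_ofReal ?_
        have h1 : ‖z‖⁻¹ ≤ ‖z - w‖⁻¹ := inv_anti₀ hzwp h
        calc f z ≤ ‖z - w‖⁻¹ * (‖z - w‖ ^ 2)⁻¹ := by
              simp only [hf]; gcongr
          _ = (‖z - w‖ ^ 3)⁻¹ := by rw [← mul_inv]; ring_nf
    have hmeas1 : Measurable fun z : EuclideanSpace ℝ (Fin 3) =>
        ENNReal.ofReal ((‖z‖ ^ 3)⁻¹) := (measurable_norm.pow_const 3).inv.ennreal_ofReal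
    have hmeas2 : Measurable fun z : EuclideanSpace ℝ (Fin 3) =>
        ENNReal.ofReal ((‖z - w‖ ^ 3)⁻¹) :=
      (((measurable_id.sub_const w).norm.pow_const 3).inv).ennreal_ofReal
    have hsplit : ∫⁻ z in Cs, ENNReal.ofReal (f z) ≤
        (∫⁻ z in Cs, ENNReal.ofReal ((‖z‖ ^ 3)⁻¹)) +
          ∫⁻ z in Cs, ENNReal.ofReal ((‖z - w‖ ^ 3)⁻¹) := by
      calc ∫⁻ z in Cs, ENNReal.ofReal (f z)
          ≤ ∫⁻ z in Cs, (ENNReal.ofReal ((‖z‖ ^ 3)⁻¹) + ENNReal.ofReal ((‖z - w‖ ^ 3)⁻¹)) :=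
            setLIntegral_mono (hmeas1.add hmeas2) hptC
        _ = _ := lintegral_add_left' hmeas1.aemeasurable _
    have hbρ : b < ρ := by rw [hbdef]; linarith
    have hg1 : (∫⁻ z in Cs, ENNReal.ofReal ((‖z‖ ^ 3)⁻¹)) ≤
        (⌈Real.logb 2 (ρ / b)⌉₊ : ℝ≥0∞) * (ENNReal.ofReal 8 * v) := by
      have hsub : Cs ⊆ {z : EuclideanSpace ℝ (Fin 3) | b < ‖z - 0‖ ∧ ‖z - 0‖ < ρ} := by
        intro z hz; simpa using ⟨hz.1, hz.2.1⟩
      refine (lintegral_mono_set hsub).trans ?_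
      have := lemB 0 b ρ hb hbρ
      rw [hv]; simpa using this
    have hg2 : (∫⁻ z in Cs, ENNReal.ofReal ((‖z - w‖ ^ 3)⁻¹)) ≤
        (⌈Real.logb 2 (2 * ρ / b)⌉₊ : ℝ≥0∞) * (ENNReal.ofReal 8 * v) := by
      have hsub : Cs ⊆ {z : EuclideanSpace ℝ (Fin 3) | b < ‖z - w‖ ∧ ‖z - w‖ < 2 * ρ} := by
        intro z hz
        refine ⟨hz.2.2, ?_⟩
        have h1 : ‖z - w‖ ≤ ‖z‖ + ‖w‖ := norm_sub_le z w
        have h2 : ‖z‖ < ρ := hz.2.1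
        linarith
      refine (lintegral_mono_set hsub).trans (lemB w b (2 * ρ) hb (by linarith))
    -- numeric bounds on the counts
    have hρw : ρ / b = 2 * (ρ / ‖w‖) := by rw [hbdef]; field_simp
    have hρw2 : 2 * ρ / b = 4 * (ρ / ‖w‖) := by rw [hbdef]; field_simp; ring
    have hlogρw : Real.log (ρ / ‖w‖) = L := rfl
    have hpos : (0:ℝ) < ρ / ‖w‖ := by linarith
    have hN1 : (⌈Real.logb 2 (ρ / b)⌉₊ : ℝ) ≤ 3 * M := by
      have h1 := hcount (ρ / b) (by rw [hρw]; linarith)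
      have h2 : Real.log (ρ / b) = Real.log 2 + L := by
        rw [hρw, Real.log_mul (by norm_num) hpos.ne', hlogρw]
      nlinarith [Real.log_two_lt_d9, hL0]
    have hN2 : (⌈Real.logb 2 (2 * ρ / b)⌉₊ : ℝ) ≤ 5 * M := by
      have h1 := hcount (2 * ρ / b) (by rw [hρw2]; linarith)
      have h2 : Real.log (2 * ρ / b) = Real.log 4 + L := by
        rw [hρw2, Real.log_mul (by norm_num) hpos.ne', hlogρw]
      have h4 : Real.log 4 = 2 * Real.log 2 := by
        rw [show (4:ℝ) = 2 ^ 2 by norm_num, Real.log_pow]; push_cast; ring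
      nlinarith [Real.log_two_lt_d9, hL0]
    have hconv : ∀ (n : ℕ) (c : ℝ), (n : ℝ) ≤ c →
        (n : ℝ≥0∞) * (ENNReal.ofReal 8 * v) ≤ v * ENNReal.ofReal (8 * c) := by
      intro n c hc
      calc (n : ℝ≥0∞) * (ENNReal.ofReal 8 * v)
          = (ENNReal.ofReal (n : ℝ) * ENNReal.ofReal 8) * v := by
            rw [ENNReal.ofReal_natCast, mul_assoc]
        _ ≤ (ENNReal.ofReal c * ENNReal.ofReal 8) * v := by
            gcongr
        _ = v * ENNReal.ofReal (8 * c) := by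
            rw [← ENNReal.ofReal_mul (by linarith [Nat.cast_nonneg (α := ℝ) n] : (0:ℝ) ≤ c)]
            rw [mul_comm c 8, mul_comm]
    calc ∫⁻ z in Cs, ENNReal.ofReal (f z)
        ≤ (∫⁻ z in Cs, ENNReal.ofReal ((‖z‖ ^ 3)⁻¹)) +
            ∫⁻ z in Cs, ENNReal.ofReal ((‖z - w‖ ^ 3)⁻¹) := hsplit
      _ ≤ v * ENNReal.ofReal (8 * (3 * M)) + v * ENNReal.ofReal (8 * (5 * M)) :=
          add_le_add (hg1.trans (hconv _ _ hN1)) (hg2.trans (hconv _ _ hN2))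
      _ = v * ENNReal.ofReal (64 * M) := by
          have hM0 : (0:ℝ) ≤ M := zero_le_one.trans hM1
          rw [← mul_add, ← ENNReal.ofReal_add (by linarith) (by linarith)]
          congr 1
          ring
  -- assemble
  have htotal : ∫⁻ z in S, ENNReal.ofReal (f z) ≤
      ENNReal.ofReal (96 * v.toReal * M) := by
    calc ∫⁻ z in S, ENNReal.ofReal (f z)
        ≤ ∫⁻ z in A ∪ B ∪ Cs, ENNReal.ofReal (f z) := lintegral_mono_set hcover
      _ ≤ (∫⁻ z in A ∪ B, ENNReal.ofReal (f z)) + ∫⁻ z in Cs, ENNReal.ofReal (f z) :=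
          lintegral_union_le _ _ _
      _ ≤ ((∫⁻ z in A, ENNReal.ofReal (f z)) + ∫⁻ z in B, ENNReal.ofReal (f z)) +
            ∫⁻ z in Cs, ENNReal.ofReal (f z) := by
          gcongr
          exact lintegral_union_le _ _ _
      _ ≤ (v * ENNReal.ofReal 16 + v * ENNReal.ofReal 16) + v * ENNReal.ofReal (64 * M) := by
          gcongr
      _ = v * ENNReal.ofReal (32 + 64 * M) := by
          rw [← mul_add, ← mul_add, ← ENNReal.ofReal_add (by norm_num) (by norm_num),
            ← ENNReal.ofReal_add (by norm_num) (by nlinarith [zero_le_one.trans hM1])]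
          norm_num
      _ ≤ v * ENNReal.ofReal (96 * M) := by
          have h32 : (32:ℝ) + 64 * M ≤ 96 * M := by nlinarith [hM1]
          exact mul_le_mul_right (ENNReal.ofReal_le_ofReal h32) v
      _ = ENNReal.ofReal (96 * v.toReal * M) := by
          conv_lhs => rw [← ENNReal.ofReal_toReal hvne]
          rw [← ENNReal.ofReal_mul ENNReal.toReal_nonneg]
          congr 1
          ring
  rw [hint]
  exact ENNReal.toReal_le_of_le_ofReal
    (by nlinarith [zero_le_one.trans hM1, hvpos.le]) htotal
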